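/- Let F and G be compact hereditary families on an infinite cardinal κ such that every singleton {α} (α < κ) belongs to the closure of F^MAX in 2^κ. If T : X_F* → X_G* is a linear map that is continuous from the weak* topology to the weak* topology and maps extreme points of the closed unit ball of X_F* to extreme points of the closed unit ball of X_G*, then for every α < κ there exist s_α ∈ G and scalars (θ_ξ^α)_{ξ∈s_α} with |θ_ξ^α| = 1 such that T(e_α*) = Σ_{ξ∈s_α} θ_ξ^α e_ξ*. -/

import Mathlib

open scoped Classical

noncomputable section

/-- Characteristic function of a finite set, as an element of the Cantor cube `2^ι`. -/
def chi {ι : Type*} (s : Finset ι) : ι → Bool := fun a => decide (a ∈ s)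

/-- The copy of a collection of finite sets inside the Cantor cube `2^ι`. -/
def chiImg {ι : Type*} (F : Set (Finset ι)) : Set (ι → Bool) := chi '' F

/-- `F` is a family: it contains the empty set and all singletons. -/
def IsFam {ι : Type*} (F : Set (Finset ι)) : Prop := ∅ ∈ F ∧ ∀ a : ι, {a} ∈ F

/-- `F` is hereditary: it is closed under subsets. -/
def IsHereditary {ι : Type*} (F : Set (Finset ι)) : Prop :=
  ∀ ⦃s t : Finset ι⦄, s ⊆ t → t ∈ F → s ∈ F

/-- `F` is compact: its copy in the Cantor cube `2^ι` is closed
(equivalently, compact). -/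
def IsCompactFam {ι : Type*} (F : Set (Finset ι)) : Prop := IsClosed (chiImg F)

/-- The set of maximal elements of `F` with respect to inclusion. -/
def famMAX {ι : Type*} (F : Set (Finset ι)) : Set (Finset ι) :=
  {s ∈ F | ∀ t ∈ F, s ⊆ t → s = t}

/-- The image `{π[s] : s ∈ F}` of a collection of finite sets under a permutation of the
index set. -/
def permImg {ι : Type*} (π : Equiv.Perm ι) (F : Set (Finset ι)) : Set (Finset ι) :=
  (fun s => Finset.image π s) '' F

variable {ι : Type*}

/-- A family of finite subsets of `ι`, containing the empty set and all singletons. -/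
structure CombFamily (ι : Type*) where
  sets : Set (Finset ι)
  empty_mem : ∅ ∈ sets
  singleton_mem : ∀ a : ι, {a} ∈ sets

variable (𝕂 : Type*) [RCLike 𝕂]

/-- The set of candidate values for the norm of `x` in the combinatorial space. -/
def normValues (F : CombFamily ι) (x : ι →₀ 𝕂) : Set ℝ :=
  (fun s : Finset ι => ∑ a ∈ s, ‖x a‖) '' F.sets

lemma normValues_nonempty (F : CombFamily ι) (x : ι →₀ 𝕂) : (normValues 𝕂 F x).Nonempty :=
  ⟨∑ a ∈ (∅ : Finset ι), ‖x a‖, ⟨∅, F.empty_mem, rfl⟩⟩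

lemma normValues_bddAbove (F : CombFamily ι) (x : ι →₀ 𝕂) : BddAbove (normValues 𝕂 F x) := by
  refine ⟨∑ a ∈ x.support, ‖x a‖, ?_⟩
  rintro r ⟨s, _, rfl⟩
  dsimp only
  have h1 : ∑ a ∈ s, ‖x a‖ = ∑ a ∈ s ∩ x.support, ‖x a‖ := by
    refine (Finset.sum_subset (Finset.inter_subset_left) ?_).symm
    intro a ha hna
    have : x a = 0 := by
      by_contra h
      exact hna (Finset.mem_inter.2 ⟨ha, Finsupp.mem_support_iff.2 h⟩)
    simp [this]
  rw [h1]
  exact Finset.sum_le_sum_of_subset_of_nonneg Finset.inter_subset_right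
    (fun a _ _ => norm_nonneg _)

/-- The norm of the combinatorial space `X_F`:
`‖x‖ = sup { ∑_{a ∈ s} |x a| : s ∈ F }`. -/
def combNorm (F : CombFamily ι) (x : ι →₀ 𝕂) : ℝ := sSup (normValues 𝕂 F x)

lemma sum_le_combNorm (F : CombFamily ι) (x : ι →₀ 𝕂) {s : Finset ι} (hs : s ∈ F.sets) :
    ∑ a ∈ s, ‖x a‖ ≤ combNorm 𝕂 F x :=
  le_csSup (normValues_bddAbove 𝕂 F x) ⟨s, hs, rfl⟩

lemma combNorm_le (F : CombFamily ι) (x : ι →₀ 𝕂) {c : ℝ}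
    (h : ∀ s ∈ F.sets, ∑ a ∈ s, ‖x a‖ ≤ c) : combNorm 𝕂 F x ≤ c :=
  csSup_le (normValues_nonempty 𝕂 F x) (by rintro r ⟨s, hs, rfl⟩; exact h s hs)

/-- The space of finitely supported functions `ι →₀ 𝕂`, regarded as a normed space
with the norm induced by the family `F`. -/
def C00 (F : CombFamily ι) (𝕂 : Type*) [RCLike 𝕂] : Type _ := ι →₀ 𝕂

variable {𝕂} in
/-- The identity map from `C00 F 𝕂` to `ι →₀ 𝕂`. -/
def C00.toFinsupp {F : CombFamily ι} (x : C00 F 𝕂) : ι →₀ 𝕂 := x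

variable {𝕂} in
/-- The identity map from `ι →₀ 𝕂` to `C00 F 𝕂`. -/
def C00.of (F : CombFamily ι) (x : ι →₀ 𝕂) : C00 F 𝕂 := x

instance (F : CombFamily ι) : AddCommGroup (C00 F 𝕂) :=
  inferInstanceAs (AddCommGroup (ι →₀ 𝕂))

instance (F : CombFamily ι) : Module 𝕂 (C00 F 𝕂) :=
  inferInstanceAs (Module 𝕂 (ι →₀ 𝕂))

variable {𝕂}

lemma C00.toFinsupp_add {F : CombFamily ι} (x y : C00 F 𝕂) :
    (x + y).toFinsupp = x.toFinsupp + y.toFinsupp := rfl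

lemma C00.toFinsupp_neg {F : CombFamily ι} (x : C00 F 𝕂) :
    (-x).toFinsupp = -x.toFinsupp := rfl

lemma C00.toFinsupp_smul {F : CombFamily ι} (c : 𝕂) (x : C00 F 𝕂) :
    (c • x).toFinsupp = c • x.toFinsupp := rfl

variable (𝕂)

instance C00.instNormedAddCommGroup (F : CombFamily ι) : NormedAddCommGroup (C00 F 𝕂) :=
  AddGroupNorm.toNormedAddCommGroup
    { toFun := fun x => combNorm 𝕂 F x.toFinsupp
      map_zero' := by
        refine le_antisymm (combNorm_le 𝕂 F _ ?_) ?_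
        · intro s _
          have : (0 : C00 F 𝕂).toFinsupp = 0 := rfl
          simp [this]
        · have := sum_le_combNorm 𝕂 F (0 : C00 F 𝕂).toFinsupp F.empty_mem
          simpa using this
      add_le' := by
        intro x y
        refine combNorm_le 𝕂 F _ ?_
        intro s hs
        rw [C00.toFinsupp_add]
        calc ∑ a ∈ s, ‖(x.toFinsupp + y.toFinsupp) a‖
            ≤ ∑ a ∈ s, (‖x.toFinsupp a‖ + ‖y.toFinsupp a‖) := by
              refine Finset.sum_le_sum ?_
              intro a _
              rw [Finsupp.add_apply]
              exact norm_add_le _ _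
          _ = (∑ a ∈ s, ‖x.toFinsupp a‖) + ∑ a ∈ s, ‖y.toFinsupp a‖ :=
              Finset.sum_add_distrib
          _ ≤ combNorm 𝕂 F x.toFinsupp + combNorm 𝕂 F y.toFinsupp :=
              add_le_add (sum_le_combNorm 𝕂 F _ hs) (sum_le_combNorm 𝕂 F _ hs)
      neg' := by
        intro x
        rw [C00.toFinsupp_neg]
        have hfun : (fun s : Finset ι => ∑ a ∈ s, ‖(-x.toFinsupp) a‖)
            = fun s : Finset ι => ∑ a ∈ s, ‖x.toFinsupp a‖ := by
          funext s
          refine Finset.sum_congr rfl fun a _ => ?_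
          rw [Finsupp.neg_apply, norm_neg]
        unfold combNorm normValues
        rw [hfun]
      eq_zero_of_map_eq_zero' := by
        intro x hx
        have hα : ∀ a : ι, x.toFinsupp a = 0 := by
          intro a
          have h1 : ‖x.toFinsupp a‖ ≤ combNorm 𝕂 F x.toFinsupp := by
            have := sum_le_combNorm 𝕂 F x.toFinsupp (F.singleton_mem a)
            simpa using this
          rw [hx] at h1
          exact norm_eq_zero.1 (le_antisymm h1 (norm_nonneg _))
        have : x.toFinsupp = 0 := Finsupp.ext hα
        exact this }

lemma C00.norm_def {F : CombFamily ι} (x : C00 F 𝕂) : ‖x‖ = combNorm 𝕂 F x.toFinsupp := rfl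

instance C00.instNormedSpace (F : CombFamily ι) : NormedSpace 𝕂 (C00 F 𝕂) where
  norm_smul_le c x := by
    rw [C00.norm_def, C00.norm_def, C00.toFinsupp_smul]
    refine combNorm_le 𝕂 F _ ?_
    intro s hs
    have : ∑ a ∈ s, ‖(c • x.toFinsupp) a‖ = ‖c‖ * ∑ a ∈ s, ‖x.toFinsupp a‖ := by
      rw [Finset.mul_sum]
      refine Finset.sum_congr rfl ?_
      intro a _
      rw [Finsupp.smul_apply]
      exact norm_smul c _
    rw [this]
    exact mul_le_mul_of_nonneg_left (sum_le_combNorm 𝕂 F _ hs) (norm_nonneg c)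

/-- The combinatorial Banach space `X_F`: the completion of `c₀₀(ι)` under the norm
induced by the family `F`. -/
def XF (F : CombFamily ι) (𝕂 : Type*) [RCLike 𝕂] : Type _ :=
  UniformSpace.Completion (C00 F 𝕂)

instance (F : CombFamily ι) : NormedAddCommGroup (XF F 𝕂) :=
  inferInstanceAs (NormedAddCommGroup (UniformSpace.Completion (C00 F 𝕂)))

instance (F : CombFamily ι) : NormedSpace 𝕂 (XF F 𝕂) :=
  inferInstanceAs (NormedSpace 𝕂 (UniformSpace.Completion (C00 F 𝕂)))

instance (F : CombFamily ι) : CompleteSpace (XF F 𝕂) :=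
  inferInstanceAs (CompleteSpace (UniformSpace.Completion (C00 F 𝕂)))

/-- The canonical unit vector basis `(e_a)` of the combinatorial space `X_F`. -/
def unitVec (F : CombFamily ι) (a : ι) : XF F 𝕂 :=
  (UniformSpace.Completion.toComplₗᵢ (𝕜 := 𝕂) (E := C00 F 𝕂))
    (C00.of F (Finsupp.single a 1))

/-- The coordinate functional `e_a^*` on `c₀₀`, as a continuous linear map. -/
def coordC00 (F : CombFamily ι) (a : ι) : C00 F 𝕂 →L[𝕂] 𝕂 :=
  LinearMap.mkContinuous
    { toFun := fun x => x.toFinsupp a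
      map_add' := fun _ _ => rfl
      map_smul' := fun _ _ => rfl } 1
    (by
      intro x
      have h1 : ‖x.toFinsupp a‖ ≤ combNorm 𝕂 F x.toFinsupp := by
        have := sum_le_combNorm 𝕂 F x.toFinsupp (F.singleton_mem a)
        simpa using this
      rw [C00.norm_def]
      show ‖x.toFinsupp a‖ ≤ 1 * _
      simpa using h1)

/-- The coordinate functional `e_a^*` of the dual of the combinatorial space `X_F`. -/
def coordFn (F : CombFamily ι) (a : ι) : StrongDual 𝕂 (XF F 𝕂) :=
  (coordC00 𝕂 F a).extend (UniformSpace.Completion.toComplL : C00 F 𝕂 →L[𝕂] XF F 𝕂)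

/-- An extreme point of a convex set `B`: a point of `B` which is not a proper convex
combination of two distinct points of `B`. -/
def IsExtremePoint {E : Type*} [AddCommGroup E] [Module 𝕂 E] (B : Set E) (x : E) : Prop :=
  x ∈ B ∧ ∀ x₁ ∈ B, ∀ x₂ ∈ B, ∀ t : ℝ, 0 < t → t < 1 →
    x = (t : 𝕂) • x₁ + ((1 - t : ℝ) : 𝕂) • x₂ → x₁ = x₂

namespace Stmt7


variable {ι : Type*} {𝕂 : Type*} [RCLike 𝕂]

/-- The canonical embedding of `c₀₀` into `X_F`. -/
def emb (F : CombFamily ι) : C00 F 𝕂 →L[𝕂] XF F 𝕂 := UniformSpace.Completion.toComplL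

variable {F : CombFamily ι}

lemma coordFn_emb (a : ι) (y : C00 F 𝕂) :
    coordFn 𝕂 F a (emb F y) = y.toFinsupp a :=
  ContinuousLinearMap.extend_eq _
    (UniformSpace.Completion.denseRange_coe)
    (UniformSpace.Completion.isUniformInducing_coe _) y

lemma emb_single (a : ι) (z : 𝕂) :
    emb F (C00.of F (Finsupp.single a z)) = z • unitVec 𝕂 F a := by
  have h : (C00.of F (Finsupp.single a z)) = z • (C00.of F (Finsupp.single a 1)) := by
    show (Finsupp.single a z : ι →₀ 𝕂) = z • Finsupp.single a 1
    have h' : (Finsupp.single a z : ι →₀ 𝕂) = z • Finsupp.single a 1 := by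
      rw [Finsupp.smul_single' z a 1, mul_one]
    exact h'
  rw [h, map_smul]
  rfl

lemma emb_of (y : ι →₀ 𝕂) :
    emb F (C00.of F y) = ∑ c ∈ y.support, y c • unitVec 𝕂 F c := by
  have h : (C00.of F y) = ∑ c ∈ y.support, (C00.of F (Finsupp.single c (y c))) := by
    show y = ∑ c ∈ y.support, Finsupp.single c (y c)
    exact (Finsupp.sum_single y).symm
  rw [h, map_sum]
  exact Finset.sum_congr rfl fun c _ => emb_single c (y c)

lemma coordFn_unitVec (a b : ι) :
    coordFn 𝕂 F a (unitVec 𝕂 F b) = if b = a then 1 else 0 := by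
  have h1 : (unitVec 𝕂 F b : XF F 𝕂) = emb F (C00.of F (Finsupp.single b 1)) := by
    rw [emb_single, one_smul]
  rw [h1, coordFn_emb]
  exact Finsupp.single_apply

lemma norm_emb (y : C00 F 𝕂) : ‖emb F y‖ = ‖y‖ :=
  (UniformSpace.Completion.toComplₗᵢ (𝕜 := 𝕂) (E := C00 F 𝕂)).norm_map y

lemma denseRange_emb : DenseRange (emb F (𝕂 := 𝕂)) := by
  have h : DenseRange ⇑(UniformSpace.Completion.toComplL (𝕜 := 𝕂) (E := C00 F 𝕂)) := by
    rw [UniformSpace.Completion.coe_toComplL]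
    exact UniformSpace.Completion.denseRange_coe
  exact h

lemma opNorm_le_one_of_dense {φ : XF F 𝕂 →L[𝕂] 𝕂}
    (h : ∀ y : C00 F 𝕂, ‖φ (emb F y)‖ ≤ ‖emb F y‖) : ‖φ‖ ≤ 1 := by
  refine ContinuousLinearMap.opNorm_le_bound φ zero_le_one (fun v => ?_)
  rw [one_mul]
  have hclosed : IsClosed {v : XF F 𝕂 | ‖φ v‖ ≤ ‖v‖} :=
    isClosed_le (continuous_norm.comp φ.continuous) continuous_norm
  have hsub : Set.range (emb F (𝕂 := 𝕂)) ⊆ {v : XF F 𝕂 | ‖φ v‖ ≤ ‖v‖} := by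
    rintro _ ⟨y, rfl⟩; exact h y
  have h2 := hclosed.closure_subset_iff.2 hsub
  exact h2 (denseRange_emb v)

lemma sum_coord_apply (s : Finset ι) (θ : ι → 𝕂) (y : C00 F 𝕂) :
    (∑ ξ ∈ s, θ ξ • coordFn 𝕂 F ξ) (emb F y) = ∑ ξ ∈ s, θ ξ * y.toFinsupp ξ := by
  rw [ContinuousLinearMap.sum_apply]
  exact Finset.sum_congr rfl fun ξ _ => by
    rw [ContinuousLinearMap.smul_apply, coordFn_emb, smul_eq_mul]

lemma norm_sum_coord_le {s : Finset ι} (hs : s ∈ F.sets) {θ : ι → 𝕂}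
    (hθ : ∀ ξ ∈ s, ‖θ ξ‖ ≤ 1) : ‖∑ ξ ∈ s, θ ξ • coordFn 𝕂 F ξ‖ ≤ 1 := by
  refine opNorm_le_one_of_dense (fun y => ?_)
  rw [sum_coord_apply, norm_emb]
  calc ‖∑ ξ ∈ s, θ ξ * y.toFinsupp ξ‖ ≤ ∑ ξ ∈ s, ‖θ ξ * y.toFinsupp ξ‖ :=
        norm_sum_le _ _
    _ ≤ ∑ ξ ∈ s, ‖y.toFinsupp ξ‖ := by
        refine Finset.sum_le_sum fun ξ hξ => ?_
        rw [norm_mul]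
        calc ‖θ ξ‖ * ‖y.toFinsupp ξ‖ ≤ 1 * ‖y.toFinsupp ξ‖ :=
              mul_le_mul_of_nonneg_right (hθ ξ hξ) (norm_nonneg _)
          _ = ‖y.toFinsupp ξ‖ := one_mul _
    _ ≤ ‖y‖ := sum_le_combNorm 𝕂 F _ hs

lemma dual_ext {φ ψ : XF F 𝕂 →L[𝕂] 𝕂}
    (h : ∀ ξ, φ (unitVec 𝕂 F ξ) = ψ (unitVec 𝕂 F ξ)) : φ = ψ := by
  refine ContinuousLinearMap.ext_on (s := Set.range (unitVec 𝕂 F)) ?_ ?_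
  · refine Dense.mono ?_ denseRange_emb
    rintro _ ⟨y, rfl⟩
    rw [show emb F y = emb F (C00.of F y.toFinsupp) from rfl, emb_of]
    refine Submodule.sum_mem _ fun c _ => Submodule.smul_mem _ _ (Submodule.subset_span ⟨c, rfl⟩)
  · rintro _ ⟨ξ, rfl⟩; exact h ξ



variable {ι : Type*} {𝕂 : Type*} [RCLike 𝕂]

lemma combo_eq_of_le {t a b c : ℝ} (ht0 : 0 < t) (ht1 : t < 1) (ha : a ≤ c) (hb : b ≤ c)
    (h : t * a + (1 - t) * b = c) : a = c ∧ b = c := by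
  constructor <;> nlinarith

lemma eq_one_of_re_eq_one {z : 𝕂} (hn : ‖z‖ ≤ 1) (hr : RCLike.re z = 1) : z = 1 := by
  have h2 : RCLike.re z * RCLike.re z + RCLike.im z * RCLike.im z = ‖z‖ ^ 2 := by
    rw [← RCLike.normSq_apply, RCLike.normSq_eq_def']
  have hsq : ‖z‖ ^ 2 ≤ 1 := by nlinarith [norm_nonneg z]
  have him2 : RCLike.im z * RCLike.im z = 0 := by nlinarith [mul_self_nonneg (RCLike.im z)]
  have him : RCLike.im z = 0 := by
    exact mul_self_eq_zero.1 him2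
  have h3 := RCLike.re_add_im z
  rw [hr, him] at h3
  simpa using h3.symm

lemma forall_eq_one_of_sum {s : Finset ι} {f : ι → ℝ} (h1 : ∀ ξ ∈ s, f ξ ≤ 1)
    (h : ∑ ξ ∈ s, f ξ = (s.card : ℝ)) : ∀ ξ ∈ s, f ξ = 1 := by
  intro ξ hξ
  by_contra hne
  have hlt : f ξ < 1 := lt_of_le_of_ne (h1 ξ hξ) hne
  have h2 : ∑ η ∈ s, f η < ∑ η ∈ s, (1 : ℝ) :=
    Finset.sum_lt_sum h1 ⟨ξ, hξ, hlt⟩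
  rw [Finset.sum_const, nsmul_eq_mul, mul_one, h] at h2
  exact lt_irrefl _ h2



variable {ι : Type*} {𝕂 : Type*} [RCLike 𝕂] {F : CombFamily ι}

/-- The characteristic vector of a finite set, as a finitely supported function. -/
def xchar (𝕂 : Type*) [RCLike 𝕂] (s : Finset ι) : ι →₀ 𝕂 := ∑ ξ ∈ s, Finsupp.single ξ 1

lemma xchar_apply (s : Finset ι) (a : ι) :
    xchar 𝕂 s a = if a ∈ s then (1 : 𝕂) else 0 := by
  rw [xchar, Finsupp.finset_sum_apply]
  rw [show (∑ ξ ∈ s, Finsupp.single ξ (1:𝕂) a) = ∑ ξ ∈ s, if ξ = a then (1:𝕂) else 0 from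
    Finset.sum_congr rfl fun ξ _ => Finsupp.single_apply]
  rw [Finset.sum_ite_eq' s a (fun _ => (1:𝕂))]

lemma norm_unitVec_le (a : ι) : ‖unitVec 𝕂 F a‖ ≤ 1 := by
  have h1 : unitVec 𝕂 F a = emb F (C00.of F (Finsupp.single a 1)) := by
    rw [emb_single, one_smul]
  rw [h1, norm_emb]
  show combNorm 𝕂 F (Finsupp.single a 1) ≤ 1
  refine combNorm_le 𝕂 F _ (fun u hu => ?_)
  have : ∀ c ∈ u, ‖(Finsupp.single a (1:𝕂)) c‖ = if a = c then 1 else 0 := by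
    intro c _
    rw [Finsupp.single_apply]
    split <;> simp
  rw [Finset.sum_congr rfl this, Finset.sum_ite_eq u a (fun _ => (1:ℝ))]
  split <;> norm_num

lemma emb_xchar (s : Finset ι) :
    emb F (C00.of F (xchar 𝕂 s)) = ∑ ξ ∈ s, unitVec 𝕂 F ξ := by
  have h : (C00.of F (xchar 𝕂 s)) = ∑ ξ ∈ s, (C00.of F (Finsupp.single ξ 1)) := by
    show xchar 𝕂 s = ∑ ξ ∈ s, Finsupp.single ξ 1
    rfl
  rw [h, map_sum]
  refine Finset.sum_congr rfl fun ξ _ => by rw [emb_single, one_smul]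

lemma norm_xchar_le (s : Finset ι) : ‖(C00.of F (xchar 𝕂 s) : C00 F 𝕂)‖ ≤ (s.card : ℝ) := by
  show combNorm 𝕂 F (xchar 𝕂 s) ≤ (s.card : ℝ)
  refine combNorm_le 𝕂 F _ (fun u hu => ?_)
  have h1 : ∀ c ∈ u, ‖(xchar 𝕂 s) c‖ = if c ∈ s then (1:ℝ) else 0 := by
    intro c _
    rw [xchar_apply]
    split <;> simp
  rw [Finset.sum_congr rfl h1, Finset.sum_ite_mem, Finset.sum_const, nsmul_eq_mul, mul_one]
  exact_mod_cast Finset.card_le_card (Finset.inter_subset_right)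

/-- Characteristic vector of `s` plus `z` at coordinate `b`. -/
def xvec (𝕂 : Type*) [RCLike 𝕂] (s : Finset ι) (b : ι) (z : 𝕂) : ι →₀ 𝕂 :=
  xchar 𝕂 s + Finsupp.single b z

lemma emb_xvec (s : Finset ι) (b : ι) (z : 𝕂) :
    emb F (C00.of F (xvec 𝕂 s b z)) = (∑ ξ ∈ s, unitVec 𝕂 F ξ) + z • unitVec 𝕂 F b := by
  have h : (C00.of F (xvec 𝕂 s b z)) = C00.of F (xchar 𝕂 s) + C00.of F (Finsupp.single b z) := rfl
  rw [h, map_add, emb_xchar, emb_single]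

lemma norm_xvec_le (hFh : IsHereditary F.sets) {s : Finset ι} (hsmax : s ∈ famMAX F.sets)
    {b : ι} (hb : b ∉ s) {z : 𝕂} (hz : ‖z‖ ≤ 1) :
    ‖(C00.of F (xvec 𝕂 s b z) : C00 F 𝕂)‖ ≤ (s.card : ℝ) := by
  show combNorm 𝕂 F (xvec 𝕂 s b z) ≤ (s.card : ℝ)
  refine combNorm_le 𝕂 F _ (fun u hu => ?_)
  have h1 : ∀ c ∈ u, ‖(xvec 𝕂 s b z) c‖
      = (if c ∈ s then (1:ℝ) else 0) + (if b = c then ‖z‖ else 0) := by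
    intro c _
    rw [xvec, Finsupp.add_apply, xchar_apply, Finsupp.single_apply]
    by_cases hcs : c ∈ s
    · have hbc : ¬ (b = c) := fun h => hb (h ▸ hcs)
      simp [hcs, hbc]
    · by_cases hbc : b = c <;> simp [hcs, hbc]
  rw [Finset.sum_congr rfl h1, Finset.sum_add_distrib, Finset.sum_ite_mem,
    Finset.sum_const, nsmul_eq_mul, mul_one, Finset.sum_ite_eq u b (fun _ => ‖z‖)]
  by_cases hbu : b ∈ u
  · have hne : u ∩ s ≠ s := by
      intro hEq
      have hsu : s ⊆ u := hEq ▸ Finset.inter_subset_left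
      have hins : insert b s ∈ F.sets := hFh (Finset.insert_subset hbu hsu) hu
      have := hsmax.2 (insert b s) hins (Finset.subset_insert b s)
      exact hb (this ▸ Finset.mem_insert_self b s)
    have hlt : (u ∩ s).card < s.card :=
      Finset.card_lt_card (lt_of_le_of_ne Finset.inter_subset_right hne)
    have : ((u ∩ s).card : ℝ) + 1 ≤ (s.card : ℝ) := by exact_mod_cast hlt
    rw [if_pos hbu]
    linarith
  · rw [if_neg hbu, add_zero]
    exact_mod_cast Finset.card_le_card (Finset.inter_subset_right)

lemma sum_coord_unitVec (s : Finset ι) (c : ι) :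
    (∑ ξ ∈ s, coordFn 𝕂 F ξ) (unitVec 𝕂 F c) = if c ∈ s then (1:𝕂) else 0 := by
  rw [ContinuousLinearMap.sum_apply]
  rw [show (∑ ξ ∈ s, coordFn 𝕂 F ξ (unitVec 𝕂 F c)) = ∑ ξ ∈ s, if c = ξ then (1:𝕂) else 0 from
    Finset.sum_congr rfl fun ξ _ => coordFn_unitVec ξ c]
  exact Finset.sum_ite_eq s c (fun _ => (1:𝕂))

lemma norm_sum_coord_le' {s : Finset ι} (hs : s ∈ F.sets) :
    ‖∑ ξ ∈ s, coordFn 𝕂 F ξ‖ ≤ 1 := by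
  have h : (∑ ξ ∈ s, coordFn 𝕂 F ξ) = ∑ ξ ∈ s, (fun _ : ι => (1:𝕂)) ξ • coordFn 𝕂 F ξ := by
    simp
  rw [h]
  exact norm_sum_coord_le hs (fun ξ _ => by norm_num)

theorem isExtremePoint_sum_coord (hFh : IsHereditary F.sets) {s : Finset ι}
    (hsmax : s ∈ famMAX F.sets) :
    IsExtremePoint 𝕂 (Metric.closedBall (0 : StrongDual 𝕂 (XF F 𝕂)) 1)
      (∑ ξ ∈ s, coordFn 𝕂 F ξ) := by
  constructor
  · exact mem_closedBall_zero_iff.2 (norm_sum_coord_le' hsmax.1)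
  intro φ₁ h1 φ₂ h2 t ht0 ht1 heq
  rw [mem_closedBall_zero_iff] at h1 h2
  set n := s.card with hn
  have hvs : (emb F (C00.of F (xchar 𝕂 s)) : XF F 𝕂) = ∑ ξ ∈ s, unitVec 𝕂 F ξ := emb_xchar s
  have hnvs : ‖(∑ ξ ∈ s, unitVec 𝕂 F ξ : XF F 𝕂)‖ ≤ (n : ℝ) := by
    rw [← hvs, norm_emb]; exact norm_xchar_le s
  -- coordinates of φ j on s are all 1
  have key : ∀ φ : StrongDual 𝕂 (XF F 𝕂), ‖φ‖ ≤ 1 →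
      (RCLike.re (φ (∑ ξ ∈ s, unitVec 𝕂 F ξ)) = (n:ℝ)) → ∀ ξ ∈ s, φ (unitVec 𝕂 F ξ) = 1 := by
    intro φ hφ hre ξ hξ
    have hsum : RCLike.re (φ (∑ ξ ∈ s, unitVec 𝕂 F ξ)) = ∑ ξ ∈ s, RCLike.re (φ (unitVec 𝕂 F ξ)) := by
      rw [map_sum φ, map_sum]
    have hbound : ∀ η ∈ s, RCLike.re (φ (unitVec 𝕂 F η)) ≤ 1 := by
      intro η _
      calc RCLike.re (φ (unitVec 𝕂 F η)) ≤ ‖φ (unitVec 𝕂 F η)‖ := RCLike.re_le_norm _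
        _ ≤ ‖φ‖ * ‖unitVec 𝕂 F η‖ := φ.le_opNorm _
        _ ≤ 1 * 1 := mul_le_mul hφ (norm_unitVec_le η) (norm_nonneg _) zero_le_one
        _ = 1 := one_mul 1
    have hall := forall_eq_one_of_sum hbound (by rw [← hsum, hre])
    refine eq_one_of_re_eq_one ?_ (hall ξ hξ)
    calc ‖φ (unitVec 𝕂 F ξ)‖ ≤ ‖φ‖ * ‖unitVec 𝕂 F ξ‖ := φ.le_opNorm _
      _ ≤ 1 * 1 := mul_le_mul hφ (norm_unitVec_le ξ) (norm_nonneg _) zero_le_one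
      _ = 1 := one_mul 1
  -- the convex-combination equation evaluated at the characteristic vector
  have heval : (n : 𝕂) = (t : 𝕂) * φ₁ (∑ ξ ∈ s, unitVec 𝕂 F ξ)
      + ((1 - t : ℝ) : 𝕂) * φ₂ (∑ ξ ∈ s, unitVec 𝕂 F ξ) := by
    have h0 : (∑ ξ ∈ s, coordFn 𝕂 F ξ) (∑ η ∈ s, unitVec 𝕂 F η) = (n : 𝕂) := by
      rw [map_sum]
      rw [show (∑ η ∈ s, (∑ ξ ∈ s, coordFn 𝕂 F ξ) (unitVec 𝕂 F η)) = ∑ η ∈ s, (1:𝕂) from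
        Finset.sum_congr rfl fun η hη => by rw [sum_coord_unitVec, if_pos hη]]
      simp
      exact hn.symm
    rw [← h0, heq]
    rfl
  have hre : RCLike.re (φ₁ (∑ ξ ∈ s, unitVec 𝕂 F ξ)) = (n:ℝ)
      ∧ RCLike.re (φ₂ (∑ ξ ∈ s, unitVec 𝕂 F ξ)) = (n:ℝ) := by
    have hre1 : ∀ φ : StrongDual 𝕂 (XF F 𝕂), ‖φ‖ ≤ 1 →
        RCLike.re (φ (∑ ξ ∈ s, unitVec 𝕂 F ξ)) ≤ (n:ℝ) := by
      intro φ hφ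
      calc RCLike.re (φ _) ≤ ‖φ (∑ ξ ∈ s, unitVec 𝕂 F ξ)‖ := RCLike.re_le_norm _
        _ ≤ ‖φ‖ * ‖(∑ ξ ∈ s, unitVec 𝕂 F ξ : XF F 𝕂)‖ := φ.le_opNorm _
        _ ≤ 1 * (n:ℝ) := mul_le_mul hφ hnvs (norm_nonneg _) zero_le_one
        _ = (n:ℝ) := one_mul _
    have hree := congrArg (RCLike.re (K := 𝕂)) heval
    rw [map_add, RCLike.re_ofReal_mul, RCLike.re_ofReal_mul, RCLike.natCast_re] at hree
    exact combo_eq_of_le ht0 ht1 (hre1 φ₁ h1) (hre1 φ₂ h2) hree.symm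
  have hc1 : ∀ ξ ∈ s, φ₁ (unitVec 𝕂 F ξ) = 1 := key φ₁ h1 hre.1
  have hc2 : ∀ ξ ∈ s, φ₂ (unitVec 𝕂 F ξ) = 1 := key φ₂ h2 hre.2
  -- off-coordinates vanish
  have hoff : ∀ φ : StrongDual 𝕂 (XF F 𝕂), ‖φ‖ ≤ 1 →
      (∀ ξ ∈ s, φ (unitVec 𝕂 F ξ) = 1) → ∀ b, b ∉ s → φ (unitVec 𝕂 F b) = 0 := by
    intro φ hφ hs1 b hb
    set w := φ (unitVec 𝕂 F b) with hw
    set z : 𝕂 := if w = 0 then 1 else (‖w‖ : 𝕂) / w with hz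
    have hz1 : ‖z‖ ≤ 1 := by
      rw [hz]
      split
      · norm_num
      · rename_i hw0
        rw [norm_div, RCLike.norm_ofReal, abs_of_nonneg (norm_nonneg w),
          div_self (norm_ne_zero_iff.2 hw0)]
    have hzw : z * w = (‖w‖ : 𝕂) := by
      rw [hz]
      split
      · rename_i hw0; simp [hw0]
      · rename_i hw0; rw [div_mul_cancel₀ _ hw0]
    have hφv : φ (emb F (C00.of F (xvec 𝕂 s b z))) = (n : 𝕂) + (‖w‖ : 𝕂) := by
      rw [emb_xvec, map_add, map_smul, map_sum]
      rw [show (∑ ξ ∈ s, φ (unitVec 𝕂 F ξ)) = ∑ ξ ∈ s, (1:𝕂) from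
        Finset.sum_congr rfl fun ξ hξ => hs1 ξ hξ]
      rw [smul_eq_mul, ← hw, hzw]
      simp
      exact hn.symm
    have hnb : ‖φ (emb F (C00.of F (xvec 𝕂 s b z)))‖ ≤ (n : ℝ) := by
      calc ‖φ (emb F (C00.of F (xvec 𝕂 s b z)))‖
          ≤ ‖φ‖ * ‖emb F (C00.of F (xvec 𝕂 s b z))‖ := φ.le_opNorm _
        _ ≤ 1 * (n : ℝ) := by
            refine mul_le_mul hφ ?_ (norm_nonneg _) zero_le_one
            rw [norm_emb]
            exact norm_xvec_le hFh hsmax hb hz1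
        _ = (n : ℝ) := one_mul _
    rw [hφv] at hnb
    have hcast : ((n : 𝕂) + (‖w‖ : 𝕂)) = (((n : ℝ) + ‖w‖ : ℝ) : 𝕂) := by push_cast; ring
    rw [hcast, RCLike.norm_ofReal, abs_of_nonneg (by positivity)] at hnb
    have : ‖w‖ ≤ 0 := by linarith
    exact norm_eq_zero.1 (le_antisymm this (norm_nonneg w))
  refine dual_ext (fun c => ?_)
  by_cases hcs : c ∈ s
  · rw [hc1 c hcs, hc2 c hcs]
  · rw [hoff φ₁ h1 hc1 c hcs, hoff φ₂ h2 hc2 c hcs]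



variable {ι : Type*} {𝕂 : Type*} [RCLike 𝕂]

lemma coe_smul_pi (r : ℝ) (v : ι → 𝕂) : (r : 𝕂) • v = r • v := by
  funext ξ
  show (r : 𝕂) * v ξ = r • v ξ
  rw [RCLike.real_smul_eq_coe_mul]

section Join

set_option linter.unusedSectionVars false

variable {E : Type*} [AddCommGroup E] [Module ℝ E] [TopologicalSpace E]
  [IsTopologicalAddGroup E] [ContinuousSMul ℝ E]

lemma isCompact_convexJoin {s t : Set E} (hs : IsCompact s) (ht : IsCompact t) :
    IsCompact (convexJoin ℝ s t) := by
  have heq : convexJoin ℝ s t =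
      (fun p : (ℝ × E) × E => p.1.1 • p.1.2 + (1 - p.1.1) • p.2) ''
        ((Set.Icc (0:ℝ) 1 ×ˢ s) ×ˢ t) := by
    ext z
    constructor
    · intro hz
      rw [mem_convexJoin] at hz
      obtain ⟨x, hx, y, hy, a, b, ha, hb, hab, rfl⟩ := hz
      refine ⟨((a, x), y), ⟨⟨⟨ha, by linarith⟩, hx⟩, hy⟩, ?_⟩
      simp only
      rw [show (1 : ℝ) - a = b by linarith]
    · rintro ⟨⟨⟨a, x⟩, y⟩, ⟨⟨⟨ha0, ha1⟩, hx⟩, hy⟩, rfl⟩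
      rw [mem_convexJoin]
      exact ⟨x, hx, y, hy, a, 1 - a, ha0, by linarith, by ring, rfl⟩
  rw [heq]
  refine (((isCompact_Icc.prod hs).prod ht).image ?_)
  exact ((continuous_fst.fst).smul continuous_fst.snd).add
    ((continuous_const.sub continuous_fst.fst).smul continuous_snd)

/-- Iterated convex join of a list of sets. -/
def joinList : List (Set E) → Set E
  | [] => ∅
  | [K] => K
  | K :: L :: l => convexJoin ℝ K (joinList (L :: l))

lemma joinList_convex : ∀ {l : List (Set E)}, (∀ K ∈ l, Convex ℝ K) → Convex ℝ (joinList l)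
  | [] => fun _ => convex_empty
  | [K] => fun h => h K (by simp)
  | K :: L :: l => fun h => by
      rw [joinList]
      exact (h K (by simp)).convexJoin
        (joinList_convex (fun K' hK' => h K' (List.mem_cons_of_mem _ hK')))

lemma joinList_isCompact : ∀ {l : List (Set E)}, (∀ K ∈ l, IsCompact K) →
      IsCompact (joinList l)
  | [] => fun _ => isCompact_empty
  | [K] => fun h => h K (by simp)
  | K :: L :: l => fun h => by
      rw [joinList]
      exact isCompact_convexJoin (h K (by simp))
        (joinList_isCompact (fun K' hK' => h K' (List.mem_cons_of_mem _ hK')))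

lemma joinList_nonempty : ∀ {l : List (Set E)}, l ≠ [] → (∀ K ∈ l, K.Nonempty) →
      (joinList l).Nonempty
  | [], h, _ => absurd rfl h
  | [K], _, h => h K (by simp)
  | K :: L :: l, _, h => by
      rw [joinList]
      obtain ⟨x, hx⟩ := h K (by simp)
      obtain ⟨y, hy⟩ := joinList_nonempty (l := L :: l) (by simp)
        (fun K' hK' => h K' (List.mem_cons_of_mem _ hK'))
      exact ⟨x, subset_convexJoin_left ⟨y, hy⟩ hx⟩

lemma subset_joinList : ∀ {l : List (Set E)} {K : Set E}, K ∈ l → (∀ K' ∈ l, K'.Nonempty) →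
      K ⊆ joinList l
  | [], K, h => by simp at h
  | [K'], K, h => fun _ => by
      simp at h
      subst h
      exact le_refl _
  | K' :: L :: l, K, h => fun hne => by
      rw [joinList]
      rcases List.mem_cons.1 h with h1 | h1
      · subst h1
        exact subset_convexJoin_left (joinList_nonempty (by simp)
          (fun K'' hK'' => hne K'' (List.mem_cons_of_mem _ hK'')))
      · refine (subset_joinList h1
          (fun K'' hK'' => hne K'' (List.mem_cons_of_mem _ hK''))).trans ?_
        exact subset_convexJoin_right (hne K' (by simp))

lemma joinList_subset : ∀ {l : List (Set E)} {B : Set E}, (∀ K ∈ l, K ⊆ B) → Convex ℝ B →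
      joinList l ⊆ B
  | [], B, _, _ => by simp [joinList]
  | [K], B, h, _ => h K (by simp)
  | K :: L :: l, B, h, hB => by
      rw [joinList]
      exact convexJoin_subset (h K (by simp))
        (joinList_subset (fun K' hK' => h K' (List.mem_cons_of_mem _ hK')) hB) hB

end Join

lemma joinList_extract : ∀ {l : List (Set (ι → 𝕂))} {B : Set (ι → 𝕂)} {p : ι → 𝕂},
    (∀ K ∈ l, K ⊆ B) → Convex ℝ B → IsExtremePoint 𝕂 B p → p ∈ joinList l →
      ∃ K ∈ l, p ∈ K
  | [], B, p, _, _, _, hp => by simp [joinList] at hp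
  | [K], B, p, _, _, _, hp => ⟨K, by simp, hp⟩
  | K :: L :: l, B, p, hB, hBc, hext, hp => by
      rw [joinList, mem_convexJoin] at hp
      obtain ⟨x, hx, y, hy, a, b, ha, hb, hab, heq⟩ := hp
      have hyB : y ∈ B := joinList_subset
        (fun K' hK' => hB K' (List.mem_cons_of_mem _ hK')) hBc hy
      have hxB : x ∈ B := hB K (by simp) hx
      rcases eq_or_lt_of_le ha with ha0 | ha0
      · -- a = 0, p = y
        have hb1 : b = 1 := by linarith
        have : p = y := by rw [← heq, ← ha0, hb1]; simp
        subst this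
        obtain ⟨K', hK', hpK'⟩ := joinList_extract (l := L :: l)
          (fun K' hK' => hB K' (List.mem_cons_of_mem _ hK')) hBc hext hy
        exact ⟨K', List.mem_cons_of_mem _ hK', hpK'⟩
      rcases eq_or_lt_of_le hb with hb0 | hb0
      · -- b = 0, p = x
        have ha1 : a = 1 := by linarith
        have : p = x := by rw [← heq, ← hb0, ha1]; simp
        exact ⟨K, by simp, this ▸ hx⟩
      · -- 0 < a < 1 : use extremality
        have ha1 : a < 1 := by linarith
        have hxy : x = y := by
          refine hext.2 x hxB y hyB a ha0 ha1 ?_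
          rw [coe_smul_pi, coe_smul_pi, ← heq, show (1:ℝ) - a = b by linarith]
        have : p = x := by
          rw [← heq, hxy, ← add_smul, hab, one_smul]
        exact ⟨K, by simp, this ▸ hx⟩

lemma mem_closure_pi {D : Set (ι → 𝕂)} {p : ι → 𝕂}
    (h : ∀ (w : Finset ι) (δ : ℝ), 0 < δ → ∃ d ∈ D, ∀ ξ ∈ w, ‖p ξ - d ξ‖ ≤ δ) :
    p ∈ closure D := by
  rw [mem_closure_iff_nhds]
  intro V hV
  rw [nhds_pi, Filter.mem_pi] at hV
  obtain ⟨I, hIfin, t, ht, hsub⟩ := hV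
  have hδ : ∀ ξ : ι, ∃ δ' : ℝ, 0 < δ' ∧ Metric.ball (p ξ) δ' ⊆ t ξ := by
    intro ξ
    obtain ⟨δ', hδ'pos, hδ'sub⟩ := Metric.mem_nhds_iff.1 (ht ξ)
    exact ⟨δ', hδ'pos, hδ'sub⟩
  choose δf hδf hball using hδ
  set w : Finset ι := hIfin.toFinset with hw
  by_cases hwne : w.Nonempty
  · set δ : ℝ := w.inf' hwne δf with hδdef
    have hδpos : 0 < δ := by
      rw [hδdef, Finset.lt_inf'_iff]
      exact fun ξ _ => hδf ξ
    obtain ⟨d, hdD, hd⟩ := h w (δ / 2) (by positivity)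
    refine ⟨d, hsub ?_, hdD⟩
    intro ξ hξ
    refine hball ξ ?_
    rw [Metric.mem_ball, dist_eq_norm, ← norm_sub_rev]
    have h1 : ‖p ξ - d ξ‖ ≤ δ / 2 := hd ξ (hIfin.mem_toFinset.2 hξ)
    have h2 : δ ≤ δf ξ := Finset.inf'_le δf (hIfin.mem_toFinset.2 hξ)
    linarith
  · obtain ⟨d, hdD, _⟩ := h ∅ 1 one_pos
    refine ⟨d, hsub ?_, hdD⟩
    intro ξ hξ
    exact absurd (hIfin.mem_toFinset.2 hξ) (fun hc => hwne ⟨ξ, hc⟩)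

/-- Milman's theorem in the product space `ι → 𝕂`: an extreme point of the closed convex
hull of a set `D` (assumed compact) belongs to the closure of `D`. -/
theorem milman_pi {D : Set (ι → 𝕂)}
    (hBcomp : IsCompact (closure (convexHull ℝ D))) {p : ι → 𝕂}
    (hext : IsExtremePoint 𝕂 (closure (convexHull ℝ D)) p) : p ∈ closure D := by
  set B := closure (convexHull ℝ D) with hBdef
  have hBconv : Convex ℝ B := (convex_convexHull ℝ D).closure
  have hDsubB : D ⊆ B := (subset_convexHull ℝ D).trans subset_closure
  have hDbar : closure D ⊆ B := by
    rw [hBdef]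
    exact closure_mono (subset_convexHull ℝ D)
  have hDbarcomp : IsCompact (closure D) := hBcomp.of_isClosed_subset isClosed_closure hDbar
  refine mem_closure_pi (fun w δ hδ => ?_)
  -- open and closed boxes around a point
  set V : (ι → 𝕂) → Set (ι → 𝕂) := fun q => {v | ∀ ξ ∈ w, v ξ ∈ Metric.ball (q ξ) (δ/2)}
    with hVdef
  set W : (ι → 𝕂) → Set (ι → 𝕂) := fun q => {v | ∀ ξ ∈ w, v ξ ∈ Metric.closedBall (q ξ) (δ/2)}
    with hWdef
  have hVopen : ∀ q, IsOpen (V q) := by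
    intro q
    have : V q = ⋂ ξ ∈ w, (fun v : ι → 𝕂 => v ξ) ⁻¹' Metric.ball (q ξ) (δ/2) := by
      ext v; simp [hVdef]
    rw [this]
    exact isOpen_biInter_finset fun ξ _ => (Metric.isOpen_ball).preimage (continuous_apply ξ)
  have hVW : ∀ q, V q ⊆ W q := fun q v hv ξ hξ => Metric.ball_subset_closedBall (hv ξ hξ)
  have hWclosed : ∀ q, IsClosed (W q) := by
    intro q
    have : W q = ⋂ ξ ∈ w, (fun v : ι → 𝕂 => v ξ) ⁻¹' Metric.closedBall (q ξ) (δ/2) := by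
      ext v; simp [hWdef]
    rw [this]
    exact isClosed_biInter fun ξ _ => Metric.isClosed_closedBall.preimage (continuous_apply ξ)
  have hWconvex : ∀ q, Convex ℝ (W q) := by
    intro q
    have : W q = ⋂ ξ ∈ w, (fun v : ι → 𝕂 => v ξ) ⁻¹' Metric.closedBall (q ξ) (δ/2) := by
      ext v; simp [hWdef]
    rw [this]
    exact convex_iInter fun ξ => convex_iInter fun _ =>
      (convex_closedBall (q ξ) (δ/2)).linear_preimage (LinearMap.proj (R := ℝ) (φ := fun _ : ι => 𝕂) ξ)
  -- finite subcover of the closure of D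
  have hcover : closure D ⊆ ⋃ q ∈ closure D, V q := by
    intro q hq
    refine Set.mem_biUnion hq ?_
    intro ξ _
    exact Metric.mem_ball_self (by positivity)
  obtain ⟨Q, hQsub, hQfin, hQcover⟩ :=
    hDbarcomp.elim_finite_subcover_image (fun q _ => hVopen q) hcover
  -- the pieces
  set K : (ι → 𝕂) → Set (ι → 𝕂) := fun q => closure (convexHull ℝ (D ∩ W q)) with hKdef
  have hKsubB : ∀ q, K q ⊆ B := fun q =>
    closure_mono (convexHull_mono Set.inter_subset_left)
  have hKconv : ∀ q, Convex ℝ (K q) := fun q => (convex_convexHull ℝ _).closure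
  have hKcomp : ∀ q, IsCompact (K q) := fun q =>
    hBcomp.of_isClosed_subset isClosed_closure (hKsubB q)
  have hKsubW : ∀ q, K q ⊆ W q := fun q =>
    closure_minimal (convexHull_min Set.inter_subset_right (hWconvex q)) (hWclosed q)
  have hKne : ∀ q ∈ Q, ∃ d, d ∈ D ∩ V q := by
    intro q hq
    have hqcl : q ∈ closure D := hQsub hq
    have hqV : q ∈ V q := fun ξ _ => Metric.mem_ball_self (by positivity)
    obtain ⟨d, hd1, hd2⟩ := _root_.mem_closure_iff.1 hqcl (V q) (hVopen q) hqV
    exact ⟨d, hd2, hd1⟩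
  -- the list of pieces
  set L : List (Set (ι → 𝕂)) := hQfin.toFinset.toList.map K with hLdef
  have hmemL : ∀ {S : Set (ι → 𝕂)}, S ∈ L → ∃ q ∈ Q, S = K q := by
    intro S hS
    rw [hLdef, List.mem_map] at hS
    obtain ⟨q, hq, rfl⟩ := hS
    exact ⟨q, hQfin.mem_toFinset.1 (Finset.mem_toList.1 hq), rfl⟩
  have hKinL : ∀ q ∈ Q, K q ∈ L := by
    intro q hq
    rw [hLdef, List.mem_map]
    exact ⟨q, Finset.mem_toList.2 (hQfin.mem_toFinset.2 hq), rfl⟩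
  have hLne : ∀ S ∈ L, S.Nonempty := by
    intro S hS
    obtain ⟨q, hq, rfl⟩ := hmemL hS
    obtain ⟨d, hd⟩ := hKne q hq
    exact ⟨d, subset_closure (subset_convexHull ℝ _ ⟨hd.1, hVW q hd.2⟩)⟩
  have hLsubB : ∀ S ∈ L, S ⊆ B := by
    intro S hS
    obtain ⟨q, _, rfl⟩ := hmemL hS
    exact hKsubB q
  -- D is contained in the join
  have hDJ : D ⊆ joinList L := by
    intro d hd
    obtain ⟨q, hq, hdV⟩ := Set.mem_iUnion₂.1 (hQcover (subset_closure hd))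
    have : d ∈ K q := subset_closure (subset_convexHull ℝ _ ⟨hd, hVW q hdV⟩)
    exact subset_joinList (hKinL q hq) hLne this
  have hJconv : Convex ℝ (joinList L) := joinList_convex (fun S hS => by
    obtain ⟨q, _, rfl⟩ := hmemL hS; exact hKconv q)
  have hJcomp : IsCompact (joinList L) := joinList_isCompact (fun S hS => by
    obtain ⟨q, _, rfl⟩ := hmemL hS; exact hKcomp q)
  have hBJ : B ⊆ joinList L :=
    closure_minimal (convexHull_min hDJ hJconv) hJcomp.isClosed
  -- extract the piece containing p
  obtain ⟨S, hSL, hpS⟩ := joinList_extract hLsubB hBconv hext (hBJ hext.1)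
  obtain ⟨q, hq, rfl⟩ := hmemL hSL
  obtain ⟨d, hdD, hdV⟩ := hKne q hq
  refine ⟨d, hdD, fun ξ hξ => ?_⟩
  have h1 : dist (p ξ) (q ξ) ≤ δ/2 := hKsubW q hpS ξ hξ
  have h2 : dist (d ξ) (q ξ) < δ/2 := hdV ξ hξ
  calc ‖p ξ - d ξ‖ = dist (p ξ) (d ξ) := (dist_eq_norm _ _).symm
    _ ≤ dist (p ξ) (q ξ) + dist (q ξ) (d ξ) := dist_triangle _ _ _
    _ ≤ δ/2 + δ/2 := add_le_add h1 (le_of_lt (dist_comm (q ξ) (d ξ) ▸ h2))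
    _ = δ := by ring


open Filter Topology

variable {ι : Type*} {𝕂 : Type*} [RCLike 𝕂]

lemma exists_coords (f : (ι → 𝕂) →L[ℝ] ℝ) :
    ∃ (w : Finset ι) (c : ι → 𝕂), ∀ v : ι → 𝕂, f v = ∑ ξ ∈ w, RCLike.re (c ξ * v ξ) := by
  -- A continuous functional only sees finitely many coordinates
  have h0 : f ⁻¹' Metric.ball (0:ℝ) 1 ∈ 𝓝 (0 : ι → 𝕂) := by
    have hc : ContinuousAt f (0 : ι → 𝕂) := f.continuous.continuousAt
    have : Metric.ball (0:ℝ) 1 ∈ 𝓝 (f 0) := by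
      rw [map_zero]
      exact Metric.ball_mem_nhds 0 one_pos
    exact hc.preimage_mem_nhds this
  rw [nhds_pi, Filter.mem_pi] at h0
  obtain ⟨I, hIfin, t, ht, hsub⟩ := h0
  have hvanish : ∀ v : ι → 𝕂, (∀ ξ ∈ I, v ξ = 0) → f v = 0 := by
    intro v hv
    by_contra hne
    set r : ℝ := 2 / |f v| with hr
    have hfv : 0 < |f v| := abs_pos.2 hne
    have hmem : r • v ∈ Set.pi I t := by
      intro ξ hξ
      have : (r • v) ξ = 0 := by
        show r • v ξ = 0
        rw [hv ξ hξ, smul_zero]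
      rw [this]
      exact mem_of_mem_nhds (ht ξ)
    have h1 : |f (r • v)| < 1 := by
      have h2 := hsub hmem
      simp only [Set.mem_preimage, Metric.mem_ball, Real.dist_eq, sub_zero] at h2
      exact h2
    rw [map_smul, smul_eq_mul, abs_mul, hr, abs_div] at h1
    rw [abs_of_nonneg (by norm_num : (0:ℝ) ≤ 2)] at h1
    rw [abs_abs, div_mul_cancel₀ _ (ne_of_gt hfv)] at h1
    norm_num at h1
  set w : Finset ι := hIfin.toFinset with hw
  have hsplit : ∀ v : ι → 𝕂, f v = ∑ ξ ∈ w, f (Pi.single ξ (v ξ)) := by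
    intro v
    have hzero : f (v - ∑ ξ ∈ w, Pi.single ξ (v ξ)) = 0 := by
      refine hvanish _ (fun η hη => ?_)
      have hsum : (∑ ξ ∈ w, Pi.single ξ (v ξ)) η = v η := by
        rw [Finset.sum_apply]
        rw [show (∑ ξ ∈ w, Pi.single ξ (v ξ) η) = ∑ ξ ∈ w, if η = ξ then v ξ else 0 from
          Finset.sum_congr rfl fun ξ _ => Pi.single_apply ξ (v ξ) η]
        rw [Finset.sum_ite_eq w η v, if_pos (hIfin.mem_toFinset.2 hη)]
      show v η - (∑ ξ ∈ w, Pi.single ξ (v ξ)) η = 0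
      rw [hsum, sub_self]
    have := map_sub f v (∑ ξ ∈ w, Pi.single ξ (v ξ))
    rw [hzero] at this
    have h2 : f v = f (∑ ξ ∈ w, Pi.single ξ (v ξ)) := by linarith
    rw [h2, map_sum]
  refine ⟨w, fun ξ => ((f (Pi.single ξ 1) : ℝ) : 𝕂)
    - ((f (Pi.single ξ (RCLike.I : 𝕂)) : ℝ) : 𝕂) * RCLike.I, fun v => ?_⟩
  rw [hsplit v]
  refine Finset.sum_congr rfl fun ξ _ => ?_
  set A : ℝ := f (Pi.single ξ (1:𝕂)) with hA
  set B3 : ℝ := f (Pi.single ξ (RCLike.I : 𝕂)) with hB3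
  set z : 𝕂 := v ξ with hz
  -- decompose `z` into real and imaginary parts
  have hzdec : (Pi.single ξ z : ι → 𝕂) = RCLike.re z • (Pi.single ξ (1:𝕂) : ι → 𝕂)
      + RCLike.im z • (Pi.single ξ (RCLike.I : 𝕂) : ι → 𝕂) := by
    funext η
    by_cases hη : η = ξ
    · subst hη
      simp only [Pi.add_apply, Pi.smul_apply, Pi.single_eq_same]
      rw [RCLike.real_smul_eq_coe_mul, RCLike.real_smul_eq_coe_mul, mul_one]
      exact (RCLike.re_add_im z).symm
    · simp only [Pi.add_apply, Pi.smul_apply, Pi.single_eq_of_ne hη]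
      simp
  have hf1 : f (Pi.single ξ z) = RCLike.re z * A + RCLike.im z * B3 := by
    rw [hzdec, map_add, map_smul, map_smul, smul_eq_mul, smul_eq_mul]
  have hre : RCLike.re (((A : 𝕂) - (B3 : 𝕂) * RCLike.I) * z)
      = A * RCLike.re z + B3 * RCLike.im z := by
    rw [RCLike.mul_re]
    have h1 : RCLike.re ((A : 𝕂) - (B3 : 𝕂) * RCLike.I) = A := by
      rw [map_sub, RCLike.ofReal_re]
      rw [show RCLike.re ((B3 : 𝕂) * RCLike.I) = 0 by
        rw [RCLike.mul_re, RCLike.ofReal_re, RCLike.ofReal_im, RCLike.I_re]; ring]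
      ring
    have h2 : RCLike.im ((A : 𝕂) - (B3 : 𝕂) * RCLike.I) = - (B3 * RCLike.im (RCLike.I : 𝕂)) := by
      rw [map_sub, RCLike.ofReal_im]
      rw [show RCLike.im ((B3 : 𝕂) * RCLike.I) = B3 * RCLike.im (RCLike.I : 𝕂) by
        rw [RCLike.mul_im, RCLike.ofReal_re, RCLike.ofReal_im]; ring]
      ring
    rw [h1, h2]
    have h3 : RCLike.im (RCLike.I : 𝕂) * RCLike.im z = RCLike.im z := RCLike.I_im' z
    have h4 : -(-(B3 * RCLike.im (RCLike.I : 𝕂)) * RCLike.im z) = B3 * RCLike.im z := by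
      rw [neg_mul, neg_neg, mul_assoc, h3]
    linarith [h4]
  rw [hf1, hre]
  ring

/-- The coordinate vectors of the canonical "extreme-like" functionals on `X_G`. -/
def coordSet (𝕂 : Type*) [RCLike 𝕂] (G : CombFamily ι) : Set (ι → 𝕂) :=
  {v | ∃ s ∈ G.sets, ∃ ε : ι → 𝕂, (∀ ξ, ‖ε ξ‖ = 1) ∧ v = fun ξ => if ξ ∈ s then ε ξ else 0}

/-- The coordinates of a functional on `X_G`. -/
def Rmap (G : CombFamily ι) (ψ : StrongDual 𝕂 (XF G 𝕂)) : ι → 𝕂 :=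
  fun ξ => ψ (unitVec 𝕂 G ξ)

variable {G : CombFamily ι}

lemma Rmap_sum_coord (s : Finset ι) (θ : ι → 𝕂) :
    Rmap G (∑ ξ ∈ s, θ ξ • coordFn 𝕂 G ξ) = fun c => if c ∈ s then θ c else 0 := by
  funext c
  show (∑ ξ ∈ s, θ ξ • coordFn 𝕂 G ξ) (unitVec 𝕂 G c) = _
  rw [ContinuousLinearMap.sum_apply]
  rw [show (∑ ξ ∈ s, (θ ξ • coordFn 𝕂 G ξ) (unitVec 𝕂 G c))
      = ∑ ξ ∈ s, if c = ξ then θ ξ else 0 by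
    refine Finset.sum_congr rfl fun ξ _ => ?_
    rw [ContinuousLinearMap.smul_apply, coordFn_unitVec, smul_eq_mul, mul_ite, mul_one, mul_zero]]
  exact Finset.sum_ite_eq s c θ

/-- The coordinate image of the closed unit ball of the dual. -/
def ballImg (𝕂 : Type*) [RCLike 𝕂] (G : CombFamily ι) : Set (ι → 𝕂) :=
  {v | ∃ ψ : StrongDual 𝕂 (XF G 𝕂), ‖ψ‖ ≤ 1 ∧ v = Rmap G ψ}

lemma coordSet_subset_ballImg : coordSet 𝕂 G ⊆ ballImg 𝕂 G := by
  rintro v ⟨s, hs, ε, hε, rfl⟩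
  exact ⟨∑ ξ ∈ s, ε ξ • coordFn 𝕂 G ξ,
    norm_sum_coord_le hs (fun ξ _ => le_of_eq (hε ξ)), (Rmap_sum_coord s ε).symm⟩

lemma ballImg_isCompact : IsCompact (ballImg 𝕂 G) := by
  have hK : IsCompact (WeakDual.toStrongDual ⁻¹'
      Metric.closedBall (0 : StrongDual 𝕂 (XF G 𝕂)) 1) :=
    WeakDual.isCompact_closedBall (𝕜 := 𝕂) (E := XF G 𝕂) 0 1
  have hcont : Continuous (fun (φ : WeakDual 𝕂 (XF G 𝕂)) (ξ : ι) => φ (unitVec 𝕂 G ξ)) :=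
    continuous_pi fun ξ => WeakDual.eval_continuous _
  have himg : ballImg 𝕂 G = (fun (φ : WeakDual 𝕂 (XF G 𝕂)) (ξ : ι) => φ (unitVec 𝕂 G ξ)) ''
      (WeakDual.toStrongDual ⁻¹' Metric.closedBall 0 1) := by
    ext v
    constructor
    · rintro ⟨ψ, hψ, rfl⟩
      refine ⟨StrongDual.toWeakDual ψ, ?_, rfl⟩
      rw [Set.mem_preimage, mem_closedBall_zero_iff]
      exact hψ
    · rintro ⟨φ, hφ, rfl⟩
      refine ⟨WeakDual.toStrongDual φ, ?_, rfl⟩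
      rw [Set.mem_preimage, mem_closedBall_zero_iff] at hφ
      exact hφ
  rw [himg]
  exact hK.image hcont

lemma ballImg_convex : Convex ℝ (ballImg 𝕂 G) := by
  rintro v₁ ⟨ψ₁, h1, rfl⟩ v₂ ⟨ψ₂, h2, rfl⟩ a b ha hb hab
  refine ⟨a • ψ₁ + b • ψ₂, ?_, ?_⟩
  · calc ‖a • ψ₁ + b • ψ₂‖ ≤ ‖a • ψ₁‖ + ‖b • ψ₂‖ := norm_add_le _ _
      _ = |a| * ‖ψ₁‖ + |b| * ‖ψ₂‖ := by
          rw [norm_smul, norm_smul, Real.norm_eq_abs, Real.norm_eq_abs]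
      _ ≤ a * 1 + b * 1 := by
          rw [abs_of_nonneg ha, abs_of_nonneg hb]
          exact add_le_add (mul_le_mul_of_nonneg_left h1 ha) (mul_le_mul_of_nonneg_left h2 hb)
      _ = 1 := by rw [mul_one, mul_one, hab]
  · funext ξ
    show a • Rmap G ψ₁ ξ + b • Rmap G ψ₂ ξ = (a • ψ₁ + b • ψ₂) (unitVec 𝕂 G ξ)
    rw [ContinuousLinearMap.add_apply, ContinuousLinearMap.smul_apply,
      ContinuousLinearMap.smul_apply]
    rfl

lemma ballImg_subset_cch : ballImg 𝕂 G ⊆ closure (convexHull ℝ (coordSet 𝕂 G)) := by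
  rintro v ⟨ψ, hψ, rfl⟩
  by_contra hout
  obtain ⟨f, u, hfb, hup⟩ := geometric_hahn_banach_closed_point
    (convex_convexHull ℝ (coordSet 𝕂 G)).closure isClosed_closure hout
  obtain ⟨w, c, hfc⟩ := exists_coords f
  set x : ι →₀ 𝕂 := ∑ ξ ∈ w, Finsupp.single ξ (c ξ) with hx
  have hx_apply : ∀ a, x a = if a ∈ w then c a else 0 := by
    intro a
    rw [hx, Finsupp.finset_sum_apply]
    rw [show (∑ ξ ∈ w, Finsupp.single ξ (c ξ) a) = ∑ ξ ∈ w, if ξ = a then c ξ else 0 from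
      Finset.sum_congr rfl fun ξ _ => Finsupp.single_apply]
    rw [Finset.sum_ite_eq' w a c]
  have hψx : ψ (emb G (C00.of G x)) = ∑ ξ ∈ w, c ξ * Rmap G ψ ξ := by
    have h1 : (C00.of G x) = ∑ ξ ∈ w, (C00.of G (Finsupp.single ξ (c ξ))) := by
      show x = ∑ ξ ∈ w, Finsupp.single ξ (c ξ)
      rw [hx]
    rw [h1, map_sum, map_sum]
    refine Finset.sum_congr rfl fun ξ _ => ?_
    rw [emb_single, map_smul, smul_eq_mul]
    rfl
  have key1 : f (Rmap G ψ) ≤ combNorm 𝕂 G x := by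
    rw [hfc]
    have h2 : (∑ ξ ∈ w, RCLike.re (c ξ * Rmap G ψ ξ))
        = RCLike.re (ψ (emb G (C00.of G x))) := by
      rw [hψx, map_sum]
    rw [h2]
    calc RCLike.re (ψ (emb G (C00.of G x))) ≤ ‖ψ (emb G (C00.of G x))‖ := RCLike.re_le_norm _
      _ ≤ ‖ψ‖ * ‖emb G (C00.of G x)‖ := ψ.le_opNorm _
      _ ≤ 1 * ‖emb G (C00.of G x)‖ :=
          mul_le_mul_of_nonneg_right hψ (norm_nonneg _)
      _ = combNorm 𝕂 G x := by rw [one_mul, norm_emb]; rfl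
  have key2 : combNorm 𝕂 G x ≤ u := by
    refine combNorm_le 𝕂 G _ (fun s hs => ?_)
    set ε : ι → 𝕂 := fun ξ => if c ξ = 0 then 1 else (‖c ξ‖ : 𝕂) / (c ξ) with hεdef
    have hε : ∀ ξ, ‖ε ξ‖ = 1 := by
      intro ξ
      rw [hεdef]
      dsimp only
      split
      · norm_num
      · rename_i h0
        rw [norm_div, RCLike.norm_ofReal, abs_of_nonneg (norm_nonneg _),
          div_self (norm_ne_zero_iff.2 h0)]
    have hcε : ∀ ξ, c ξ * ε ξ = (‖c ξ‖ : 𝕂) := by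
      intro ξ
      rw [hεdef]
      dsimp only
      split
      · rename_i h0; simp [h0]
      · rename_i h0
        rw [mul_div_assoc', mul_comm, mul_div_assoc, div_self h0, mul_one]
    have hd : (fun ξ => if ξ ∈ s then ε ξ else 0) ∈ coordSet 𝕂 G := ⟨s, hs, ε, hε, rfl⟩
    have hfd : f (fun ξ => if ξ ∈ s then ε ξ else 0) < u :=
      hfb _ (subset_closure (subset_convexHull ℝ _ hd))
    have hfd2 : f (fun ξ => if ξ ∈ s then ε ξ else 0) = ∑ ξ ∈ w ∩ s, ‖c ξ‖ := by
      rw [hfc]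
      rw [show (∑ ξ ∈ w, RCLike.re (c ξ * if ξ ∈ s then ε ξ else 0))
          = ∑ ξ ∈ w, if ξ ∈ s then ‖c ξ‖ else 0 by
        refine Finset.sum_congr rfl fun ξ _ => ?_
        by_cases hξs : ξ ∈ s
        · rw [if_pos hξs, if_pos hξs, hcε ξ, RCLike.ofReal_re]
        · rw [if_neg hξs, if_neg hξs, mul_zero, map_zero]]
      rw [Finset.sum_ite_mem]
    have hsum : (∑ a ∈ s, ‖x a‖) = ∑ ξ ∈ w ∩ s, ‖c ξ‖ := by
      rw [show (∑ a ∈ s, ‖x a‖) = ∑ a ∈ s, if a ∈ w then ‖c a‖ else 0 by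
        refine Finset.sum_congr rfl fun a _ => ?_
        rw [hx_apply a]
        by_cases haw : a ∈ w
        · rw [if_pos haw, if_pos haw]
        · rw [if_neg haw, if_neg haw, norm_zero]]
      rw [Finset.sum_ite_mem, Finset.inter_comm]
    rw [hsum, ← hfd2]
    exact le_of_lt hfd
  linarith [lt_of_lt_of_le hup (key1.trans key2)]

lemma cch_coordSet_eq_ballImg :
    closure (convexHull ℝ (coordSet 𝕂 G)) = ballImg 𝕂 G := by
  refine le_antisymm ?_ ballImg_subset_cch
  exact closure_minimal (convexHull_min coordSet_subset_ballImg ballImg_convex)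
    ballImg_isCompact.isClosed

/-- Key step: the coordinates of an extreme point of the dual unit ball lie in the closure
of the canonical coordinate set. -/
theorem extreme_Rmap_mem_closure {ψ : StrongDual 𝕂 (XF G 𝕂)}
    (hψ : IsExtremePoint 𝕂 (Metric.closedBall (0 : StrongDual 𝕂 (XF G 𝕂)) 1) ψ) :
    Rmap G ψ ∈ closure (coordSet 𝕂 G) := by
  have hψn : ‖ψ‖ ≤ 1 := mem_closedBall_zero_iff.1 hψ.1
  refine milman_pi ?_ ?_
  · rw [cch_coordSet_eq_ballImg]
    exact ballImg_isCompact
  · constructor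
    · rw [cch_coordSet_eq_ballImg]
      exact ⟨ψ, hψn, rfl⟩
    · intro v₁ hv₁ v₂ hv₂ t ht0 ht1 heqv
      rw [cch_coordSet_eq_ballImg] at hv₁ hv₂
      obtain ⟨φ₁, hn1, rfl⟩ := hv₁
      obtain ⟨φ₂, hn2, rfl⟩ := hv₂
      have hcombo : ψ = (t : 𝕂) • φ₁ + ((1 - t : ℝ) : 𝕂) • φ₂ := by
        refine dual_ext (fun ξ => ?_)
        have := congrFun heqv ξ
        show ψ (unitVec 𝕂 G ξ) = ((t : 𝕂) • φ₁ + ((1 - t : ℝ) : 𝕂) • φ₂) (unitVec 𝕂 G ξ)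
        rw [ContinuousLinearMap.add_apply, ContinuousLinearMap.smul_apply,
          ContinuousLinearMap.smul_apply]
        exact this
      have := hψ.2 φ₁ (mem_closedBall_zero_iff.2 hn1) φ₂ (mem_closedBall_zero_iff.2 hn2)
        t ht0 ht1 hcombo
      rw [this]

/-- Description of the elements of the closure of the coordinate set, for a compact family. -/
theorem closure_coordSet_spec (hGc : IsCompactFam G.sets) {p : ι → 𝕂}
    (hp : p ∈ closure (coordSet 𝕂 G)) :
    ∃ t ∈ G.sets, (∀ ξ ∈ t, ‖p ξ‖ = 1) ∧ (∀ ξ, ξ ∉ t → p ξ = 0) := by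
  obtain ⟨U, hUD, hUp⟩ := mem_closure_iff_ultrafilter.1 hp
  set h : (ι → 𝕂) → (ι → Bool) := fun v ξ => decide (v ξ ≠ 0) with hh
  -- the supports converge to the characteristic function of a member of `G`
  obtain ⟨χ, -, hχ⟩ := isCompact_univ.ultrafilter_le_nhds (U.map h)
    (by simp)
  have htendh : Filter.Tendsto h (U : Filter (ι → 𝕂)) (𝓝 χ) := hχ
  have hcoordchi : ∀ᶠ v in (U : Filter (ι → 𝕂)), h v ∈ chiImg G.sets := by
    refine Filter.eventually_of_mem hUD (fun v hv => ?_)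
    obtain ⟨s, hs, ε, hε, rfl⟩ := hv
    refine ⟨s, hs, ?_⟩
    funext ξ
    show chi s ξ = decide ((if ξ ∈ s then ε ξ else 0) ≠ 0)
    rw [chi]
    refine (decide_eq_decide.2 ?_)
    constructor
    · intro hmem
      rw [if_pos hmem]
      intro hc
      have h5 := hε ξ
      rw [hc, norm_zero] at h5
      norm_num at h5
    · intro hne
      by_contra hmem
      rw [if_neg hmem] at hne
      exact hne rfl
  have hχmem : χ ∈ chiImg G.sets := by
    have : χ ∈ closure (chiImg G.sets) := mem_closure_of_tendsto htendh hcoordchi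
    rwa [hGc.closure_eq] at this
  obtain ⟨tset, htG, hchi⟩ := hχmem
  refine ⟨tset, htG, ?_, ?_⟩
  all_goals
    have hcoord : ∀ ξ : ι, Filter.Tendsto (fun v : ι → 𝕂 => v ξ) (U : Filter (ι → 𝕂)) (𝓝 (p ξ)) :=
      fun ξ => ((continuous_apply ξ).tendsto p).comp (tendsto_id'.2 hUp)
    have hbool : ∀ ξ : ι, ∀ᶠ v in (U : Filter (ι → 𝕂)), h v ξ = chi tset ξ := by
      intro ξ
      have : Filter.Tendsto (fun v : ι → 𝕂 => h v ξ) (U : Filter (ι → 𝕂)) (𝓝 (chi tset ξ)) := by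
        rw [hchi]
        exact ((continuous_apply ξ).tendsto χ).comp htendh
      rw [nhds_discrete, Filter.tendsto_pure] at this
      exact this
  · -- on tset the coordinates have norm one
    intro ξ hξ
    have hev : ∀ᶠ v in (U : Filter (ι → 𝕂)), ‖v ξ‖ = 1 := by
      filter_upwards [hbool ξ, hUD] with v hv1 hv2
      obtain ⟨s, hs, ε, hε, rfl⟩ := hv2
      have htrue : h (fun ξ => if ξ ∈ s then ε ξ else 0) ξ = true := by
        rw [hv1, chi]
        exact decide_eq_true hξ
      have hne : (if ξ ∈ s then ε ξ else 0) ≠ 0 := of_decide_eq_true htrue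
      show ‖(if ξ ∈ s then ε ξ else 0 : 𝕂)‖ = 1
      by_cases hξs : ξ ∈ s
      · rw [if_pos hξs]
        exact hε ξ
      · exfalso
        rw [if_neg hξs] at hne
        exact hne rfl
    have hclosed : IsClosed {z : 𝕂 | ‖z‖ = 1} := isClosed_eq continuous_norm continuous_const
    exact hclosed.mem_of_tendsto (hcoord ξ) hev
  · -- off tset the coordinates vanish
    intro ξ hξ
    have hev : ∀ᶠ v in (U : Filter (ι → 𝕂)), v ξ = 0 := by
      filter_upwards [hbool ξ] with v hv1
      have : h v ξ = false := by
        rw [hv1, chi]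
        exact decide_eq_false (fun hc => hξ hc)
      exact not_not.1 (of_decide_eq_false this)
    have : Filter.Tendsto (fun v : ι → 𝕂 => v ξ) (U : Filter (ι → 𝕂)) (𝓝 0) :=
      Filter.Tendsto.congr' (Filter.EventuallyEq.symm hev) tendsto_const_nhds
    exact tendsto_nhds_unique (hcoord ξ) this


open Filter Topology

variable {ι : Type*} {𝕂 : Type*} [RCLike 𝕂] {F : CombFamily ι}

lemma sum_coord_apply' (s : Finset ι) (y : C00 F 𝕂) :
    (∑ ξ ∈ s, coordFn 𝕂 F ξ) (emb F y) = ∑ ξ ∈ s, y.toFinsupp ξ := by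
  rw [ContinuousLinearMap.sum_apply]
  exact Finset.sum_congr rfl fun ξ _ => coordFn_emb ξ y

lemma norm_coordFn_le (a : ι) : ‖coordFn 𝕂 F a‖ ≤ 1 := by
  have h := norm_sum_coord_le' (F := F) (𝕂 := 𝕂) (s := {a}) (F.singleton_mem a)
  rwa [Finset.sum_singleton] at h

lemma tendsto_eval_of_eventually {α : Type*} {l : Filter α} [l.NeBot]
    {Φ : α → StrongDual 𝕂 (XF F 𝕂)} {φ : StrongDual 𝕂 (XF F 𝕂)}
    (hb : ∀ᶠ i in l, ‖Φ i‖ ≤ 1) (hφ : ‖φ‖ ≤ 1)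
    (hy : ∀ y : C00 F 𝕂, ∀ᶠ i in l, Φ i (emb F y) = φ (emb F y)) (v : XF F 𝕂) :
    Filter.Tendsto (fun i => Φ i v) l (𝓝 (φ v)) := by
  rw [Metric.tendsto_nhds]
  intro ε hε
  obtain ⟨y, hdy⟩ := denseRange_emb.exists_dist_lt v (show (0:ℝ) < ε/3 by linarith)
  filter_upwards [hb, hy y] with i hbi hyi
  have h1 : dist (Φ i v) (Φ i (emb F y)) ≤ ε/3 := by
    rw [dist_eq_norm, ← map_sub]
    calc ‖Φ i (v - emb F y)‖ ≤ ‖Φ i‖ * ‖v - emb F y‖ := (Φ i).le_opNorm _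
      _ ≤ 1 * ‖v - emb F y‖ := mul_le_mul_of_nonneg_right hbi (norm_nonneg _)
      _ = dist v (emb F y) := by rw [one_mul, dist_eq_norm]
      _ ≤ ε/3 := le_of_lt hdy
  have h3 : dist (φ (emb F y)) (φ v) ≤ ε/3 := by
    rw [dist_eq_norm, ← map_sub]
    calc ‖φ (emb F y - v)‖ ≤ ‖φ‖ * ‖emb F y - v‖ := φ.le_opNorm _
      _ ≤ 1 * ‖emb F y - v‖ := mul_le_mul_of_nonneg_right hφ (norm_nonneg _)
      _ = dist v (emb F y) := by rw [one_mul, norm_sub_rev, dist_eq_norm]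
      _ ≤ ε/3 := le_of_lt hdy
  calc dist (Φ i v) (φ v) ≤ dist (Φ i v) (Φ i (emb F y)) + dist (Φ i (emb F y)) (φ v) :=
        dist_triangle _ _ _
    _ ≤ dist (Φ i v) (Φ i (emb F y)) + (dist (Φ i (emb F y)) (φ (emb F y))
        + dist (φ (emb F y)) (φ v)) := by
          linarith [dist_triangle (Φ i (emb F y)) (φ (emb F y)) (φ v)]
    _ = dist (Φ i v) (Φ i (emb F y)) + dist (φ (emb F y)) (φ v) := by rw [hyi]; simp
    _ ≤ ε/3 + ε/3 := add_le_add h1 h3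
    _ < ε := by linarith

theorem statement7' {ι : Type*} [Infinite ι] {𝕂 : Type*} [RCLike 𝕂]
    (F G : CombFamily ι)
    (hFc : IsCompactFam F.sets) (hFh : IsHereditary F.sets)
    (hGc : IsCompactFam G.sets) (hGh : IsHereditary G.sets)
    (hFmax : ∀ a : ι, chi ({a} : Finset ι) ∈ closure (chiImg (famMAX F.sets)))
    (T : StrongDual 𝕂 (XF F 𝕂) →ₗ[𝕂] StrongDual 𝕂 (XF G 𝕂))
    (hTcont : Continuous fun φ : WeakDual 𝕂 (XF F 𝕂) =>
      StrongDual.toWeakDual (T (WeakDual.toStrongDual φ)))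
    (hText : ∀ φ : StrongDual 𝕂 (XF F 𝕂),
      IsExtremePoint 𝕂 (Metric.closedBall (0 : StrongDual 𝕂 (XF F 𝕂)) 1) φ →
      IsExtremePoint 𝕂 (Metric.closedBall (0 : StrongDual 𝕂 (XF G 𝕂)) 1) (T φ)) :
    ∀ a : ι, ∃ s ∈ G.sets, ∃ θ : ι → 𝕂, (∀ ξ ∈ s, ‖θ ξ‖ = 1) ∧
      T (coordFn 𝕂 F a) = ∑ ξ ∈ s, θ ξ • coordFn 𝕂 G ξ := by
  intro a
  obtain ⟨U, hUE, hUlim⟩ := mem_closure_iff_ultrafilter.1 (hFmax a)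
  -- a selection of maximal sets converging to `{a}`
  set g : (ι → Bool) → Finset ι :=
    fun χ => if hex : ∃ s ∈ famMAX F.sets, chi s = χ then hex.choose else ∅ with hgdef
  have hg : ∀ χ ∈ chiImg (famMAX F.sets), g χ ∈ famMAX F.sets ∧ chi (g χ) = χ := by
    rintro χ ⟨s, hs, rfl⟩
    have hex : ∃ s' ∈ famMAX F.sets, chi s' = chi s := ⟨s, hs, rfl⟩
    constructor
    · show (if hex' : ∃ s' ∈ famMAX F.sets, chi s' = chi s then hex'.choose else ∅)
        ∈ famMAX F.sets
      rw [dif_pos hex]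
      exact hex.choose_spec.1
    · show chi (if hex' : ∃ s' ∈ famMAX F.sets, chi s' = chi s then hex'.choose else ∅) = chi s
      rw [dif_pos hex]
      exact hex.choose_spec.2
  set Φ : (ι → Bool) → StrongDual 𝕂 (XF F 𝕂) :=
    fun χ => ∑ ξ ∈ g χ, coordFn 𝕂 F ξ with hΦdef
  have hUE' : ∀ᶠ χ in (U : Filter (ι → Bool)), χ ∈ chiImg (famMAX F.sets) := hUE
  have hnorm : ∀ᶠ χ in (U : Filter (ι → Bool)), ‖Φ χ‖ ≤ 1 := by
    filter_upwards [hUE'] with χ hχ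
    exact norm_sum_coord_le' ((hg χ hχ).1).1
  have hextr : ∀ᶠ χ in (U : Filter (ι → Bool)),
      IsExtremePoint 𝕂 (Metric.closedBall (0 : StrongDual 𝕂 (XF F 𝕂)) 1) (Φ χ) := by
    filter_upwards [hUE'] with χ hχ
    exact isExtremePoint_sum_coord hFh (hg χ hχ).1
  -- coordinatewise convergence of the characteristic functions
  have hcoordbool : ∀ b : ι, ∀ᶠ χ in (U : Filter (ι → Bool)), χ b = chi ({a} : Finset ι) b := by
    intro b
    have ht : Filter.Tendsto (fun χ : ι → Bool => χ b) (U : Filter (ι → Bool))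
        (𝓝 (chi ({a} : Finset ι) b)) :=
      ((continuous_apply b).tendsto _).mono_left hUlim
    rw [nhds_discrete, Filter.tendsto_pure] at ht
    exact ht
  -- pointwise convergence on the dense subspace
  have hy : ∀ y : C00 F 𝕂, ∀ᶠ χ in (U : Filter (ι → Bool)),
      Φ χ (emb F y) = coordFn 𝕂 F a (emb F y) := by
    intro y
    have hall : ∀ᶠ χ in (U : Filter (ι → Bool)),
        ∀ b ∈ insert a y.toFinsupp.support, χ b = chi ({a} : Finset ι) b :=
      (Filter.eventually_all_finset _).2 (fun b _ => hcoordbool b)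
    filter_upwards [hUE', hall] with χ hχ hagree
    rw [hΦdef]
    dsimp only
    rw [sum_coord_apply', coordFn_emb]
    obtain ⟨hgmax, hgchi⟩ := hg χ hχ
    have ha_in : a ∈ g χ := by
      have h1 : χ a = chi ({a} : Finset ι) a := hagree a (Finset.mem_insert_self a _)
      have h2 : chi ({a} : Finset ι) a = true := by
        rw [chi]
        exact decide_eq_true (Finset.mem_singleton_self a)
      rw [← hgchi] at h1
      rw [chi] at h1
      exact of_decide_eq_true (h1.trans h2)
    refine Finset.sum_eq_single_of_mem a ha_in (fun b hb hne => ?_)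
    by_contra hyb
    have hbsupp : b ∈ y.toFinsupp.support := Finsupp.mem_support_iff.2 hyb
    have h1 : χ b = chi ({a} : Finset ι) b := hagree b (Finset.mem_insert_of_mem hbsupp)
    have h2 : chi ({a} : Finset ι) b = false := by
      rw [chi]
      refine decide_eq_false (fun hc => hne (Finset.mem_singleton.1 hc))
    have h3 : χ b = true := by
      rw [← hgchi, chi]
      exact decide_eq_true hb
    rw [h3, h2] at h1
    exact absurd h1 (by simp)
  -- weak* convergence to the coordinate functional
  have hweak : Filter.Tendsto (fun χ => StrongDual.toWeakDual (Φ χ))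
      (U : Filter (ι → Bool)) (𝓝 (StrongDual.toWeakDual (coordFn 𝕂 F a))) := by
    rw [tendsto_iff_forall_eval_tendsto_topDualPairing]
    intro v
    exact tendsto_eval_of_eventually hnorm (norm_coordFn_le a) hy v
  -- transport through `T`
  have hTw : Filter.Tendsto (fun χ => StrongDual.toWeakDual (T (Φ χ)))
      (U : Filter (ι → Bool)) (𝓝 (StrongDual.toWeakDual (T (coordFn 𝕂 F a)))) :=
    (hTcont.tendsto _).comp hweak
  -- coordinates converge
  have hcontR : Continuous (fun (φ : WeakDual 𝕂 (XF G 𝕂)) (ξ : ι) => φ (unitVec 𝕂 G ξ)) :=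
    continuous_pi fun ξ => WeakDual.eval_continuous _
  have hRtend : Filter.Tendsto (fun χ => Rmap G (T (Φ χ))) (U : Filter (ι → Bool))
      (𝓝 (Rmap G (T (coordFn 𝕂 F a)))) :=
    (hcontR.tendsto _).comp hTw
  -- the limit lies in the closure of the coordinate set
  have hev : ∀ᶠ χ in (U : Filter (ι → Bool)),
      Rmap G (T (Φ χ)) ∈ closure (coordSet 𝕂 G) := by
    filter_upwards [hextr] with χ hχ
    exact extreme_Rmap_mem_closure (hText (Φ χ) hχ)
  have hmem : Rmap G (T (coordFn 𝕂 F a)) ∈ closure (coordSet 𝕂 G) := by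
    have := mem_closure_of_tendsto hRtend hev
    rwa [closure_closure] at this
  obtain ⟨t, htG, hone, hzero⟩ := closure_coordSet_spec hGc hmem
  refine ⟨t, htG, Rmap G (T (coordFn 𝕂 F a)), hone, ?_⟩
  refine dual_ext (fun c => ?_)
  have hR := congrFun (Rmap_sum_coord (G := G) t (Rmap G (T (coordFn 𝕂 F a)))) c
  show Rmap G (T (coordFn 𝕂 F a)) c
    = (∑ ξ ∈ t, Rmap G (T (coordFn 𝕂 F a)) ξ • coordFn 𝕂 G ξ) (unitVec 𝕂 G c)
  refine Eq.trans ?_ hR.symm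
  by_cases hct : c ∈ t
  · rw [if_pos hct]
  · rw [if_neg hct]
    exact hzero c hct


end Stmt7


/-- Let `F`, `G` be compact hereditary families on an infinite cardinal such
that every singleton lies in the closure of `F^MAX`. If `T : X_F^* → X_G^*` is linear,
weak*-weak* continuous and maps extreme points of the dual unit ball to extreme points, then
each `T e_a^*` has the form `Σ_{ξ∈s_a} θ_ξ^a e_ξ^*` with `s_a ∈ G` and `|θ_ξ^a| = 1`. -/
theorem statement7 {ι : Type*} [Infinite ι] {𝕂 : Type*} [RCLike 𝕂]
    (F G : CombFamily ι)
    (hFc : IsCompactFam F.sets) (hFh : IsHereditary F.sets)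
    (hGc : IsCompactFam G.sets) (hGh : IsHereditary G.sets)
    (hFmax : ∀ a : ι, chi ({a} : Finset ι) ∈ closure (chiImg (famMAX F.sets)))
    (T : StrongDual 𝕂 (XF F 𝕂) →ₗ[𝕂] StrongDual 𝕂 (XF G 𝕂))
    (hTcont : Continuous fun φ : WeakDual 𝕂 (XF F 𝕂) =>
      StrongDual.toWeakDual (T (WeakDual.toStrongDual φ)))
    (hText : ∀ φ : StrongDual 𝕂 (XF F 𝕂),
      IsExtremePoint 𝕂 (Metric.closedBall (0 : StrongDual 𝕂 (XF F 𝕂)) 1) φ →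
      IsExtremePoint 𝕂 (Metric.closedBall (0 : StrongDual 𝕂 (XF G 𝕂)) 1) (T φ)) :
    ∀ a : ι, ∃ s ∈ G.sets, ∃ θ : ι → 𝕂, (∀ ξ ∈ s, ‖θ ξ‖ = 1) ∧
      T (coordFn 𝕂 F a) = ∑ ξ ∈ s, θ ξ • coordFn 𝕂 G ξ := by
  exact Stmt7.statement7' F G hFc hFh hGc hGh hFmax T hTcont hText
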